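/- (1) For every finite colouring of the positive integers there exist a colour class C and an infinite set H ⊆ C such that h₁ + h₂ ∈ C for all h₁, h₂ ∈ H with h₁ < h₂. (2) For every finite colouring of the positive integers there exist a colour class C and an infinite set H ⊆ C such that h₂ − h₁ ∈ C for all h₁, h₂ ∈ H with h₁ < h₂. (Equivalently, both x + y = z and −x + y = z are Ramsey partition regular in (x,y),z.) -/

import Mathlib

namespace Stmt14Aux

/-- Sum of the coerced values of a stream of positive naturals over `Ico n m`. -/
def Sn (a : Stream' ℕ+) (n m : ℕ) : ℕ := ∑ i ∈ Finset.Ico n m, (a.get i : ℕ)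

/-- `x` is realized as a finite sum of the stream `a` dropped by `n`. -/
def R (a : Stream' ℕ+) (n : ℕ) (x : ℕ) : Prop :=
  ∃ p ∈ Hindman.FS (a.drop n), (p : ℕ) = x

theorem R_mono {a : Stream' ℕ+} {n m x : ℕ} (h : R a n x) (hmn : m ≤ n) : R a m x := by
  obtain ⟨p, hp, rfl⟩ := h
  refine ⟨p, ?_, rfl⟩
  apply Hindman.FS_iter_tail_sub_FS (a.drop m) (n - m)
  rwa [Stream'.drop_drop, show m + (n - m) = n by omega]

theorem int_sum (a : Stream' ℕ+) : ∀ (d n : ℕ), R a n (Sn a n (n + d + 1)) := by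
  intro d
  induction d with
  | zero =>
    intro n
    refine ⟨(a.drop n).head, Hindman.FS.head _, ?_⟩
    rw [Stream'.head_drop]
    simp [Sn, Nat.Ico_succ_singleton]
  | succ d ih =>
    intro n
    obtain ⟨p, hp, hpe⟩ := ih (n + 1)
    refine ⟨(a.drop n).head + p, Hindman.FS.cons _ _ ?_, ?_⟩
    · rwa [Stream'.tail_drop']
    · rw [PNat.add_coe, Stream'.head_drop, hpe]
      have h0 : n ≤ n + 1 := by omega
      have h1 : n + 1 ≤ n + (d + 1) + 1 := by omega
      rw [Sn, Sn, ← Finset.sum_Ico_consecutive _ h0 h1, Nat.Ico_succ_singleton,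
        Finset.sum_singleton, show n + 1 + d + 1 = n + (d + 1) + 1 by omega]

theorem int_plus (a : Stream' ℕ+) :
    ∀ (d n x : ℕ), R a (n + d + 1) x → R a n (Sn a n (n + d + 1) + x) := by
  intro d
  induction d with
  | zero =>
    intro n x hx
    obtain ⟨p, hp, rfl⟩ := hx
    refine ⟨(a.drop n).head + p, Hindman.FS.cons _ _ ?_, ?_⟩
    · rwa [Stream'.tail_drop']
    · rw [PNat.add_coe, Stream'.head_drop]
      simp [Sn, Nat.Ico_succ_singleton]
  | succ d ih =>
    intro n x hx
    have hx' : R a (n + 1 + d + 1) x := by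
      have : n + 1 + d + 1 = n + (d + 1) + 1 := by omega
      rwa [this]
    obtain ⟨p, hp, hpe⟩ := ih (n + 1) x hx'
    refine ⟨(a.drop n).head + p, Hindman.FS.cons _ _ ?_, ?_⟩
    · rwa [Stream'.tail_drop']
    · rw [PNat.add_coe, Stream'.head_drop, hpe]
      have h0 : n ≤ n + 1 := by omega
      have h1 : n + 1 ≤ n + (d + 1) + 1 := by omega
      rw [Sn, Sn, ← Finset.sum_Ico_consecutive _ h0 h1, Nat.Ico_succ_singleton,
        Finset.sum_singleton, show n + 1 + d + 1 = n + (d + 1) + 1 by omega, Nat.add_assoc]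
      omega

/-- From `n < m`, realize `Sn a n m`. -/
theorem int_sum' (a : Stream' ℕ+) {n m : ℕ} (h : n < m) : R a n (Sn a n m) := by
  obtain ⟨d, rfl⟩ : ∃ d, m = n + d + 1 := ⟨m - n - 1, by omega⟩
  exact int_sum a d n

theorem int_plus' (a : Stream' ℕ+) {n m x : ℕ} (h : n < m) (hx : R a m x) :
    R a n (Sn a n m + x) := by
  obtain ⟨d, rfl⟩ : ∃ d, m = n + d + 1 := ⟨m - n - 1, by omega⟩
  exact int_plus a d n x hx

theorem Sn_ge (a : Stream' ℕ+) (n m : ℕ) : m - n ≤ Sn a n m := by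
  have h := Finset.card_nsmul_le_sum (Finset.Ico n m) (fun i => (a.get i : ℕ)) 1
    (fun i _ => (a.get i).one_le)
  simpa [Sn, Nat.card_Ico] using h

end Stmt14Aux

open Stmt14Aux in
/-- Both `x + y = z` and `−x + y = z` are Ramsey partition regular in `(x,y),z`:
for every finite colouring of the positive integers there are a colour class `C` and an
infinite `H ⊆ C` with all pairwise sums (resp. all pairwise differences) from `H` in `C`. -/
theorem stmt_14 :
    (∀ r : ℕ, ∀ col : ℕ → Fin r, ∃ j : Fin r, ∃ H : Set ℕ,
      H.Infinite ∧ (∀ h ∈ H, 0 < h ∧ col h = j) ∧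
      ∀ h₁ ∈ H, ∀ h₂ ∈ H, h₁ < h₂ → 0 < h₁ + h₂ ∧ col (h₁ + h₂) = j) ∧
    (∀ r : ℕ, ∀ col : ℕ → Fin r, ∃ j : Fin r, ∃ H : Set ℕ,
      H.Infinite ∧ (∀ h ∈ H, 0 < h ∧ col h = j) ∧
      ∀ h₁ ∈ H, ∀ h₂ ∈ H, h₁ < h₂ → 0 < h₂ - h₁ ∧ col (h₂ - h₁) = j) := by
  have hind : ∀ r : ℕ, ∀ col : ℕ → Fin r, r ≠ 0 →
      ∃ (j : Fin r) (a : Stream' ℕ+), Hindman.FS a ⊆ {x : ℕ+ | col ↑x = j} := by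
    intro r col hr
    obtain ⟨c, hc, a, hFS⟩ :=
      Hindman.exists_FS_of_finite_cover (Set.range fun j : Fin r => {x : ℕ+ | col ↑x = j})
        (Set.finite_range _)
        (by
          intro x _
          exact Set.mem_sUnion.2 ⟨{y : ℕ+ | col ↑y = col ↑x}, ⟨col ↑x, rfl⟩, rfl⟩)
    obtain ⟨j, rfl⟩ := hc
    exact ⟨j, a, hFS⟩
  constructor
  · -- sums
    intro r col
    by_cases hr : r = 0
    · subst hr; exact (col 0).elim0
    obtain ⟨j, a, hFS⟩ := hind r col hr
    have key : ∀ n x, R a n x → 0 < x ∧ col x = j := by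
      intro n x hx
      obtain ⟨p, hp, rfl⟩ := R_mono hx (Nat.zero_le n)
      rw [Stream'.drop_zero] at hp
      exact ⟨p.pos, hFS hp⟩
    set t : ℕ → ℕ := fun k => Sn a (2 ^ k) (2 ^ (k + 1)) with ht
    have hpow : ∀ k : ℕ, 2 ^ k < 2 ^ (k + 1) := fun k =>
      Nat.pow_lt_pow_right (by norm_num) (by omega)
    have hge : ∀ k, 2 ^ k ≤ t k := by
      intro k
      show 2 ^ k ≤ Sn a (2 ^ k) (2 ^ (k + 1))
      have h1 := Sn_ge a (2 ^ k) (2 ^ (k + 1))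
      have h2 : (2 : ℕ) ^ (k + 1) = 2 ^ k + 2 ^ k := by rw [pow_succ]; omega
      omega
    have ht_mem : ∀ k, R a (2 ^ k) (t k) := fun k => int_sum' a (hpow k)
    refine ⟨j, Set.range t, ?_, ?_, ?_⟩
    · apply Set.infinite_of_not_bddAbove
      rintro ⟨b, hb⟩
      have h1 := hb (Set.mem_range_self b)
      have h2 := hge b
      have h3 := Nat.lt_two_pow_self (n := b)
      replace h1 : t b ≤ b := h1
      omega
    · rintro h ⟨k, rfl⟩
      exact key _ _ (ht_mem k)
    · rintro h₁ ⟨i, rfl⟩ h₂ ⟨k, rfl⟩ hlt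
      rcases Nat.lt_trichotomy i k with hik | hik | hik
      · refine key (2 ^ i) _ ?_
        have hx : R a (2 ^ (i + 1)) (t k) :=
          R_mono (ht_mem k) (Nat.pow_le_pow_right (by norm_num) (by omega))
        exact int_plus' a (hpow i) hx
      · subst hik; omega
      · have : t i + t k = t k + t i := by omega
        rw [this]
        refine key (2 ^ k) _ ?_
        have hx : R a (2 ^ (k + 1)) (t i) :=
          R_mono (ht_mem i) (Nat.pow_le_pow_right (by norm_num) (by omega))
        exact int_plus' a (hpow k) hx
  · -- differences
    intro r col
    by_cases hr : r = 0
    · subst hr; exact (col 0).elim0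
    obtain ⟨j, a, hFS⟩ := hind r col hr
    have key : ∀ n x, R a n x → 0 < x ∧ col x = j := by
      intro n x hx
      obtain ⟨p, hp, rfl⟩ := R_mono hx (Nat.zero_le n)
      rw [Stream'.drop_zero] at hp
      exact ⟨p.pos, hFS hp⟩
    set s : ℕ → ℕ := fun k => Sn a 0 (k + 1) with hs
    have hmono : StrictMono s := by
      apply strictMono_nat_of_lt_succ
      intro k
      have : Sn a 0 (k + 1 + 1) = Sn a 0 (k + 1) + (a.get (k + 1) : ℕ) :=
        Finset.sum_Ico_succ_top (by omega) _
      have hp := (a.get (k + 1)).pos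
      simp only [hs]
      omega
    refine ⟨j, Set.range s, Set.infinite_range_of_injective hmono.injective, ?_, ?_⟩
    · rintro h ⟨k, rfl⟩
      exact key 0 _ (int_sum' a (by omega))
    · rintro h₁ ⟨i, rfl⟩ h₂ ⟨k, rfl⟩ hlt
      have hik : i < k := hmono.lt_iff_lt.mp hlt
      have hsplit : Sn a 0 (i + 1) + Sn a (i + 1) (k + 1) = Sn a 0 (k + 1) :=
        Finset.sum_Ico_consecutive _ (by omega) (by omega)
      have hsub : s k - s i = Sn a (i + 1) (k + 1) := by
        simp only [hs]; omega
      rw [hsub]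
      exact key (i + 1) _ (int_sum' a (by omega))
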